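/- Let p ≥ 1 and q ≥ 0 be integers and let H' ⊆ E ∖ H. Then H' covers all violated cuts (i.e. δ_{H'}(S) ≠ ∅ for every violated vertex set S) if and only if H' is a feasible augmentation for every violating edge set F. -/

import Mathlib

open scoped Classical

/-- The edges of `H` with exactly one endpoint in `S` (the cut `δ_H(S)`).
Edges are abstract objects of type `E` with endpoint maps `g₁ g₂ : E → V`. -/
noncomputable def cutEdges {V E : Type*} (g₁ g₂ : E → V) (H : Finset E) (S : Finset V) :
    Finset E :=
  H.filter fun e => (g₁ e ∈ S) ≠ (g₂ e ∈ S)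

/-- `u` and `v` are connected by a path using only edges of `H`. -/
def ConnectedIn {V E : Type*} (g₁ g₂ : E → V) (H : Finset E) (u v : V) : Prop :=
  Relation.ReflTransGen (fun a b => ∃ e ∈ H, (g₁ e = a ∧ g₂ e = b) ∨ (g₁ e = b ∧ g₂ e = a)) u v

/-- `u` and `v` are `p`-edge-connected in `H`: for every `D ⊆ H` with `|D| ≤ p - 1`,
`u` and `v` are connected in `H \ D`. -/
def PEdgeConnected {V E : Type*} (g₁ g₂ : E → V) (p : ℕ) (H : Finset E) (u v : V) : Prop :=
  ∀ D : Finset E, D ⊆ H → D.card ≤ p - 1 → ConnectedIn g₁ g₂ (H \ D) u v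

/-- `u` and `v` are `(p,q)`-flex-connected in `H` (with unsafe edge set `Unsafe`):
for every `U ⊆ Unsafe` with `|U| ≤ q`, `u` and `v` are `p`-edge-connected in `H \ U`. -/
def FlexConnected {V E : Type*} (g₁ g₂ : E → V) (Unsafe : Finset E) (p q : ℕ)
    (H : Finset E) (u v : V) : Prop :=
  ∀ U : Finset E, U ⊆ Unsafe → U.card ≤ q → PEdgeConnected g₁ g₂ p (H \ U) u v

/-- A vertex set `S` is violated (w.r.t. the partial solution `H`, safe edges `Safe`,
parameters `p q` and terminal pairs `st`): exactly one of `s_i, t_i` lies in `S` for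
some `i`, `|δ_H(S)| = p + q`, and `|δ_H(S) ∩ Safe| ≤ p - 1`. -/
def Violated {V E : Type*} (g₁ g₂ : E → V) (Safe : Finset E) (p q : ℕ) {k : ℕ}
    (st : Fin k → V × V) (H : Finset E) (S : Finset V) : Prop :=
  (∃ i : Fin k, ((st i).1 ∈ S) ≠ ((st i).2 ∈ S)) ∧
    (cutEdges g₁ g₂ H S).card = p + q ∧
    (cutEdges g₁ g₂ H S ∩ Safe).card ≤ p - 1

lemma mem_cutEdges {V E : Type*} (g₁ g₂ : E → V) (H : Finset E) (S : Finset V) (e : E) :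
    e ∈ cutEdges g₁ g₂ H S ↔ e ∈ H ∧ ¬((g₁ e ∈ S) ↔ (g₂ e ∈ S)) := by
  simp [cutEdges, ne_eq, eq_iff_iff]

lemma connectedIn_symm {V E : Type*} (g₁ g₂ : E → V) (A : Finset E) {u v : V}
    (h : ConnectedIn g₁ g₂ A u v) : ConnectedIn g₁ g₂ A v u := by
  refine (@Relation.ReflTransGen.stdSymm _ _ ⟨?_⟩).symm _ _ h
  intro a b ⟨e, he, hor⟩
  exact ⟨e, he, hor.symm⟩

lemma connectedIn_invariant {V E : Type*} (g₁ g₂ : E → V) (A : Finset E) (T : Finset V)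
    (hcl : ∀ e ∈ A, (g₁ e ∈ T ↔ g₂ e ∈ T)) {u v : V}
    (h : ConnectedIn g₁ g₂ A u v) (hu : u ∈ T) : v ∈ T := by
  induction h with
  | refl => exact hu
  | tail _ hbc ih =>
      obtain ⟨e, he, hor⟩ := hbc
      rcases hor with ⟨h1, h2⟩ | ⟨h1, h2⟩
      · rw [← h2]; exact (hcl e he).mp (by rw [h1]; exact ih)
      · rw [← h1]; exact (hcl e he).mpr (by rw [h2]; exact ih)

lemma connectedIn_crossing {V E : Type*} (g₁ g₂ : E → V) (A : Finset E) (S : Finset V)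
    {u v : V} (h : ConnectedIn g₁ g₂ A u v) (huv : ¬((u ∈ S) ↔ (v ∈ S))) :
    ∃ e ∈ A, ¬((g₁ e ∈ S) ↔ (g₂ e ∈ S)) := by
  by_contra hno
  push_neg at hno
  have hcl : ∀ e ∈ A, (g₁ e ∈ S ↔ g₂ e ∈ S) := hno
  by_cases hu : u ∈ S
  · exact huv ⟨fun _ => connectedIn_invariant g₁ g₂ A S hcl h hu, fun _ => hu⟩
  · refine huv ⟨fun hu' => absurd hu' hu, fun hv => ?_⟩
    exact connectedIn_invariant g₁ g₂ A S hcl (connectedIn_symm g₁ g₂ A h) hv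

/-- `H'` covers all violated cuts iff `H'` is a feasible augmentation for every
violating edge set `F`. -/
theorem covers_violated_cuts_iff_feasible_augmentation {V E : Type*} [Fintype V] [Fintype E]
    (g₁ g₂ : E → V) (Safe Unsafe : Finset E) (hpart : Unsafe = Safeᶜ)
    (p q : ℕ) (hp : 1 ≤ p) (k : ℕ) (st : Fin k → V × V) (H : Finset E)
    (hH : ∀ i : Fin k, FlexConnected g₁ g₂ Unsafe p q H (st i).1 (st i).2)
    (H' : Finset E) (hH' : Disjoint H' H) :
    (∀ S : Finset V, Violated g₁ g₂ Safe p q st H S →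
        (cutEdges g₁ g₂ H' S).Nonempty) ↔
      ∀ F : Finset E,
        (∃ S : Finset V, Violated g₁ g₂ Safe p q st H S ∧ F = cutEdges g₁ g₂ H S) →
        ∀ i : Fin k, ConnectedIn g₁ g₂ ((H ∪ H') \ F) (st i).1 (st i).2 := by
  constructor
  · -- covering → feasible augmentation
    intro hcov F hF i
    obtain ⟨S, hS, rfl⟩ := hF
    set F := cutEdges g₁ g₂ H S with hFdef
    by_contra hconn
    set A := (H ∪ H') \ F with hA
    set T := Finset.univ.filter (fun v => ConnectedIn g₁ g₂ A (st i).1 v) with hT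
    have hsT : (st i).1 ∈ T :=
      Finset.mem_filter.mpr ⟨Finset.mem_univ _, Relation.ReflTransGen.refl⟩
    have htT : (st i).2 ∉ T := by
      simp only [hT, Finset.mem_filter, Finset.mem_univ, true_and]
      exact hconn
    have hcl : ∀ e ∈ A, (g₁ e ∈ T ↔ g₂ e ∈ T) := by
      intro e he
      simp only [hT, Finset.mem_filter, Finset.mem_univ, true_and]
      constructor
      · intro h1; exact Relation.ReflTransGen.tail h1 ⟨e, he, Or.inl ⟨rfl, rfl⟩⟩
      · intro h2; exact Relation.ReflTransGen.tail h2 ⟨e, he, Or.inr ⟨rfl, rfl⟩⟩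
    have hFH : F ⊆ H := Finset.filter_subset _ _
    have hCF : cutEdges g₁ g₂ H T ⊆ F := by
      intro e he
      rw [mem_cutEdges] at he
      by_contra heF
      exact he.2 (hcl e (Finset.mem_sdiff.mpr ⟨Finset.mem_union_left _ he.1, heF⟩))
    set C := cutEdges g₁ g₂ H T with hC
    have hCH : C ⊆ H := Finset.filter_subset _ _
    have hFcard : F.card = p + q := hS.2.1
    have hCcardle : C.card ≤ p + q := hFcard ▸ Finset.card_le_card hCF
    by_cases hcase : C.card = p + q
    · have hCeqF : C = F := Finset.eq_of_subset_of_card_le hCF (by omega)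
      have hTviol : Violated g₁ g₂ Safe p q st H T := by
        refine ⟨⟨i, ?_⟩, hcase, ?_⟩
        · simp only [ne_eq, eq_iff_iff]
          exact fun h => htT (h.mp hsT)
        · rw [show cutEdges g₁ g₂ H T = F from hCeqF]
          exact hS.2.2
      obtain ⟨e, heT'⟩ := hcov T hTviol
      rw [mem_cutEdges] at heT'
      have heA : e ∈ A :=
        Finset.mem_sdiff.mpr ⟨Finset.mem_union_right _ heT'.1,
          fun hf => (Finset.disjoint_left.mp hH' heT'.1) (hFH hf)⟩
      exact heT'.2 (hcl e heA)
    · obtain ⟨U, hUsub, hUcard⟩ :=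
        Finset.exists_subset_card_eq (s := C ∩ Unsafe) (n := min q (C ∩ Unsafe).card) (min_le_right _ _)
      have hUC : U ⊆ C := hUsub.trans Finset.inter_subset_left
      have hUUn : U ⊆ Unsafe := hUsub.trans Finset.inter_subset_right
      set D := C \ U with hD
      have hDsub : D ⊆ H \ U := Finset.sdiff_subset_sdiff hCH (le_refl _)
      have hDcard : D.card = C.card - U.card := Finset.card_sdiff_of_subset hUC
      have hUq : U.card ≤ q := by rw [hUcard]; exact min_le_left _ _
      have hDle : D.card ≤ p - 1 := by
        rcases le_or_gt q (C ∩ Unsafe).card with hq | hq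
        · have hUcq : U.card = q := by omega
          omega
        · have hUeq : U = C ∩ Unsafe := Finset.eq_of_subset_of_card_le hUsub (by omega)
          have hDS : D = C ∩ Safe := by
            rw [hD, hUeq, hpart]
            ext e
            simp only [Finset.mem_sdiff, Finset.mem_inter, Finset.mem_compl]
            tauto
          rw [hDS]
          calc (C ∩ Safe).card ≤ (F ∩ Safe).card :=
                Finset.card_le_card (Finset.inter_subset_inter hCF le_rfl)
            _ ≤ p - 1 := hS.2.2
      have hconn2 := hH i U hUUn hUq D hDsub hDle
      have hHUD : (H \ U) \ D = H \ C := by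
        ext e
        simp only [hD, Finset.mem_sdiff]
        constructor
        · rintro ⟨⟨heH, heU⟩, heD⟩
          exact ⟨heH, fun heC => heD ⟨heC, heU⟩⟩
        · rintro ⟨heH, heC⟩
          exact ⟨⟨heH, fun heU => heC (hUC heU)⟩, fun hd => heC hd.1⟩
      rw [hHUD] at hconn2
      have hcl2 : ∀ e ∈ H \ C, (g₁ e ∈ T ↔ g₂ e ∈ T) := by
        intro e he
        rw [Finset.mem_sdiff] at he
        by_contra h'
        exact he.2 ((mem_cutEdges g₁ g₂ H T e).mpr ⟨he.1, h'⟩)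
      exact htT (connectedIn_invariant g₁ g₂ _ T hcl2 hconn2 hsT)
  · -- feasible augmentation → covering
    intro hfeas S hS
    obtain ⟨i, hi⟩ := hS.1
    have hconn := hfeas (cutEdges g₁ g₂ H S) ⟨S, hS, rfl⟩ i
    have hi' : ¬(((st i).1 ∈ S) ↔ ((st i).2 ∈ S)) := by
      simpa only [ne_eq, eq_iff_iff] using hi
    obtain ⟨e, heA, hecross⟩ := connectedIn_crossing g₁ g₂ _ S hconn hi'
    rw [Finset.mem_sdiff, Finset.mem_union] at heA
    have heH' : e ∈ H' := by
      rcases heA.1 with h | h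
      · exact absurd ((mem_cutEdges g₁ g₂ H S e).mpr ⟨h, hecross⟩) heA.2
      · exact h
    exact ⟨e, (mem_cutEdges g₁ g₂ H' S e).mpr ⟨heH', hecross⟩⟩
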